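/- Let φ(x) = ∫_x^∞ (1 − F(u)) du for a CDF F with E[X_+] < ∞ and M = sup{x : F(x) < 1}, let 0 ≤ μ₀ < M and λ > 0, and let μ(t) solve μ'(t) = λφ(μ(t)), μ(0) = μ₀. Then μ is defined for all t ≥ 0, is strictly increasing, strictly concave, continuously differentiable, and satisfies lim_{t→∞} μ(t) = M. -/

import Mathlib

open MeasureTheory Set Filter
open scoped ENNReal

/-- the solution μ of μ' = λφ(μ), μ(0) = μ₀ (defined for all t ≥ 0) is strictly
increasing, strictly concave, continuously differentiable, and μ(t) → M as t → ∞. -/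
theorem stmt6 {Ω : Type*} [MeasurableSpace Ω] (P : Measure Ω) [IsProbabilityMeasure P]
    (X : Ω → ℝ) (hX : Measurable X)
    (hint : Integrable (fun ω => max (X ω) 0) P)
    (F : ℝ → ℝ) (hF : ∀ x, F x = (P {ω | X ω ≤ x}).toReal)
    (M : EReal) (hM : M = sSup ((fun x : ℝ => (x : EReal)) '' {x : ℝ | F x < 1}))
    (φ : ℝ → ℝ) (hφ : ∀ x, φ x = ∫ u in Ioi x, (1 - F u))
    (lam μ₀ : ℝ) (hlam : 0 < lam) (hμ₀ : 0 ≤ μ₀) (hμ₀M : (μ₀ : EReal) < M)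
    (μ : ℝ → ℝ) (hinit : μ 0 = μ₀)
    (hode : ∀ t : ℝ, 0 ≤ t → HasDerivAt μ (lam * φ (μ t)) t) :
    StrictMonoOn μ (Ici 0) ∧
    StrictConcaveOn ℝ (Ici 0) μ ∧
    ContinuousOn (fun t => lam * φ (μ t)) (Ici 0) ∧
    Tendsto (fun t => (μ t : EReal)) atTop (nhds M) := by
  -- basic facts about F
  have hFle1 : ∀ u, F u ≤ 1 := by
    intro u
    rw [hF]
    calc (P {ω | X ω ≤ u}).toReal ≤ (1 : ℝ≥0∞).toReal :=
          ENNReal.toReal_mono (by simp) prob_le_one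
      _ = 1 := by simp
  have hFmono : Monotone F := by
    intro u v huv
    rw [hF, hF]
    exact ENNReal.toReal_mono (measure_ne_top _ _)
      (measure_mono fun ω h => le_trans h huv)
  have hFmble : Measurable F := hFmono.measurable
  have hXle : ∀ u : ℝ, MeasurableSet {ω | X ω ≤ u} := fun u => hX measurableSet_Iic
  have htail : ∀ u, 1 - F u = (P {ω | u < X ω}).toReal := by
    intro u
    have hc : {ω | u < X ω} = {ω | X ω ≤ u}ᶜ := by ext ω; simp [not_le]
    rw [hc, prob_compl_eq_one_sub (hXle u), ENNReal.toReal_sub_of_le prob_le_one (by simp),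
      hF]
    simp
  -- characterization of M
  have hltM : ∀ x : ℝ, (x : EReal) < M ↔ ∃ y, x < y ∧ F y < 1 := by
    intro x
    rw [hM, lt_sSup_iff]
    constructor
    · rintro ⟨b, ⟨y, hy, rfl⟩, hxb⟩
      exact ⟨y, by exact_mod_cast show (x : EReal) < (y : EReal) from hxb, hy⟩
    · rintro ⟨y, hxy, hy⟩
      exact ⟨(y : EReal), ⟨y, hy, rfl⟩, by exact_mod_cast hxy⟩
  have hFone : ∀ u : ℝ, M < (u : EReal) → F u = 1 := by
    intro u hu
    by_contra h
    have h1 : F u < 1 := lt_of_le_of_ne (hFle1 u) h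
    have : (u : EReal) ≤ M := hM ▸ le_sSup ⟨u, h1, rfl⟩
    exact absurd hu (not_lt.2 this)
  -- integrability of 1 - F on Ioi x
  have hofReal : ∀ u, ENNReal.ofReal (1 - F u) = P {ω | u < X ω} := by
    intro u
    rw [htail u, ENNReal.ofReal_toReal (measure_ne_top _ _)]
  have hlint : ∀ x : ℝ, (∫⁻ u in Ioi x, ENNReal.ofReal (1 - F u)) < ⊤ := by
    have key : (∫⁻ u in Ioi (0 : ℝ), P {ω | u < X ω}) < ⊤ := by
      have hnn : 0 ≤ᵐ[P] fun ω => max (X ω) 0 := ae_of_all _ fun ω => le_max_right _ _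
      have hlc := lintegral_eq_lintegral_meas_lt P hnn (hX.max measurable_const).aemeasurable
      have hcongr : (∫⁻ u in Ioi (0 : ℝ), P {a | u < max (X a) 0})
          = ∫⁻ u in Ioi (0 : ℝ), P {ω | u < X ω} := by
        refine setLIntegral_congr_fun measurableSet_Ioi (fun u hu => ?_)
        congr 1
        ext a
        simp only [mem_setOf_eq, lt_max_iff]
        exact or_iff_left (lt_asymm hu)
      rw [← hcongr, ← hlc]
      exact hint.lintegral_lt_top
    intro x
    calc ∫⁻ u in Ioi x, ENNReal.ofReal (1 - F u)
        = ∫⁻ u in Ioi x, P {ω | u < X ω} := by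
          exact lintegral_congr fun u => by rw [hofReal]
      _ ≤ ∫⁻ u in Ioc x 0 ∪ Ioi 0, P {ω | u < X ω} := by
          apply lintegral_mono_set
          intro u hu
          rcases le_or_gt u 0 with h | h
          · exact Or.inl ⟨hu, h⟩
          · exact Or.inr h
      _ ≤ (∫⁻ u in Ioc x 0, P {ω | u < X ω}) + ∫⁻ u in Ioi 0, P {ω | u < X ω} :=
          lintegral_union_le _ _ _
      _ < ⊤ := by
          refine ENNReal.add_lt_top.2 ⟨?_, key⟩
          calc (∫⁻ u in Ioc x 0, P {ω | u < X ω}) ≤ ∫⁻ _ in Ioc x 0, 1 :=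
                lintegral_mono fun u => prob_le_one
            _ = volume (Ioc x 0) := setLIntegral_one _
            _ < ⊤ := measure_Ioc_lt_top
  have hIntOn : ∀ x : ℝ, IntegrableOn (fun u => 1 - F u) (Ioi x) := by
    intro x
    refine ⟨(measurable_const.sub hFmble).aestronglyMeasurable, ?_⟩
    rw [hasFiniteIntegral_iff_ofReal (ae_of_all _ fun u => sub_nonneg.2 (hFle1 u))]
    exact hlint x
  -- splitting of φ
  have hsplit : ∀ a b : ℝ, a ≤ b → φ a = (∫ u in Ioc a b, (1 - F u)) + φ b := by
    intro a b hab
    rw [hφ a, hφ b, ← Ioc_union_Ioi_eq_Ioi hab,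
      setIntegral_union Ioc_disjoint_Ioi_same measurableSet_Ioi
        ((hIntOn a).mono_set Ioc_subset_Ioi_self) (hIntOn b)]
  have hIocnn : ∀ a b : ℝ, 0 ≤ ∫ u in Ioc a b, (1 - F u) :=
    fun a b => setIntegral_nonneg measurableSet_Ioc fun u _ => sub_nonneg.2 (hFle1 u)
  have hFnn : ∀ u, 0 ≤ F u := fun u => by rw [hF]; exact ENNReal.toReal_nonneg
  have hIocle : ∀ a b : ℝ, a ≤ b → (∫ u in Ioc a b, (1 - F u)) ≤ b - a := by
    intro a b hab
    have h1 : (∫ u in Ioc a b, (1 - F u)) ≤ ∫ _ in Ioc a b, (1 : ℝ) :=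
      setIntegral_mono_on ((hIntOn a).mono_set Ioc_subset_Ioi_self)
        (integrableOn_const measure_Ioc_lt_top.ne) measurableSet_Ioc
        (fun u _ => by linarith [hFnn u])
    have h2 : (∫ _ in Ioc a b, (1 : ℝ)) = b - a := by
      rw [setIntegral_const, Real.volume_real_Ioc_of_le hab,
        smul_eq_mul, mul_one]
    linarith
  have hφnn : ∀ x, 0 ≤ φ x := by
    intro x
    rw [hφ]
    exact setIntegral_nonneg measurableSet_Ioi fun u _ => sub_nonneg.2 (hFle1 u)
  have hφanti : Antitone φ := by
    intro a b hab
    rw [hsplit a b hab]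
    linarith [hIocnn a b]
  have hIocpos : ∀ a b : ℝ, a < b → (b : EReal) < M → 0 < ∫ u in Ioc a b, (1 - F u) := by
    intro a b hab hbM
    obtain ⟨y, hby, hy⟩ := (hltM b).1 hbM
    have h1 : (∫ _ in Ioc a b, (1 - F y)) ≤ ∫ u in Ioc a b, (1 - F u) := by
      apply setIntegral_mono_on (integrableOn_const measure_Ioc_lt_top.ne)
        ((hIntOn a).mono_set Ioc_subset_Ioi_self) measurableSet_Ioc
      intro u hu
      have : F u ≤ F y := hFmono (le_trans hu.2 hby.le)
      linarith
    have h2 : (∫ _ in Ioc a b, (1 - F y)) = (b - a) * (1 - F y) := by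
      rw [setIntegral_const, Real.volume_real_Ioc_of_le hab.le,
        smul_eq_mul]
    nlinarith [sub_pos.2 hy, sub_pos.2 hab]
  have hφpos : ∀ x : ℝ, (x : EReal) < M → 0 < φ x := by
    intro x hx
    obtain ⟨y, hxy, hy⟩ := (hltM x).1 hx
    have hyM : (y : EReal) ≤ M := hM ▸ le_sSup ⟨y, hy, rfl⟩
    have hmid : (((x + y) / 2 : ℝ) : EReal) < M := by
      refine lt_of_lt_of_le ?_ hyM
      exact_mod_cast (by linarith : (x + y) / 2 < y)
    have h1 : 0 < ∫ u in Ioc x ((x + y) / 2), (1 - F u) :=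
      hIocpos x _ (by linarith) hmid
    have := hsplit x ((x + y) / 2) (by linarith)
    have := hφnn ((x + y) / 2)
    linarith
  have hφstrict : ∀ a b : ℝ, a < b → (b : EReal) < M → φ b < φ a := by
    intro a b hab hbM
    have := hsplit a b hab.le
    have := hIocpos a b hab hbM
    linarith
  have hφub : ∀ m : ℝ, M = (m : EReal) → ∀ x : ℝ, x ≤ m → φ x ≤ m - x := by
    intro m hMm x hxm
    have hφm : φ m = 0 := by
      rw [hφ]
      have hz : ∀ u ∈ Ioi m, (1 - F u) = (0 : ℝ) := by
        intro u hu
        rw [hFone u (by rw [hMm]; exact_mod_cast hu)]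
        ring
      rw [setIntegral_congr_fun measurableSet_Ioi hz, integral_zero]
    have := hsplit x m hxm
    have := hIocle x m hxm
    linarith
  -- μ stays below M
  have hμcont : ContinuousOn μ (Ici 0) :=
    fun t ht => (hode t ht).continuousAt.continuousWithinAt
  have hMbot : (⊥ : EReal) < M := lt_of_le_of_lt bot_le hμ₀M
  have hμM : ∀ t : ℝ, 0 ≤ t → (μ t : EReal) < M := by
    intro t ht
    by_cases hMtop : M = ⊤
    · rw [hMtop]; exact EReal.coe_lt_top _
    have hm : M = ((M.toReal : ℝ) : EReal) := (EReal.coe_toReal hMtop (ne_of_gt hMbot)).symm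
    set m := M.toReal with hmdef
    have hμ₀m : μ₀ < m := by
      rw [hm] at hμ₀M
      exact_mod_cast hμ₀M
    rw [hm, EReal.coe_lt_coe_iff]
    by_contra hcon
    push_neg at hcon
    set Tset : Set ℝ := Ici 0 ∩ μ ⁻¹' (Ici m) with hTdef
    have hTne : Tset.Nonempty := ⟨t, ht, hcon⟩
    have hTbdd : BddBelow Tset := ⟨0, fun r hr => hr.1⟩
    have hTclosed : IsClosed Tset :=
      hμcont.preimage_isClosed_of_isClosed isClosed_Ici isClosed_Ici
    set s := sInf Tset with hsdef
    have hsT : s ∈ Tset := hTclosed.csInf_mem hTne hTbdd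
    have hs0 : 0 ≤ s := hsT.1
    have hsm : m ≤ μ s := hsT.2
    have hlt : ∀ r, 0 ≤ r → r < s → μ r < m := by
      intro r hr0 hrs
      have hnm : r ∉ Tset := notMem_of_lt_csInf hrs hTbdd
      by_contra h
      exact hnm ⟨hr0, not_lt.1 h⟩
    set g : ℝ → ℝ := fun r => (m - μ r) * Real.exp (lam * r) with hgdef
    have hg : ∀ r : ℝ, 0 ≤ r →
        HasDerivAt g ((lam * Real.exp (lam * r)) * ((m - μ r) - φ (μ r))) r := by
      intro r hr
      have h1 : HasDerivAt (fun r => m - μ r) (0 - lam * φ (μ r)) r :=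
        (hasDerivAt_const r m).sub (hode r hr)
      have h2 : HasDerivAt (fun r => Real.exp (lam * r)) (Real.exp (lam * r) * (lam * 1)) r :=
        (Real.hasDerivAt_exp (lam * r)).comp r ((hasDerivAt_id r).const_mul lam)
      have h3 := h1.mul h2
      exact h3.congr_deriv (by ring)
    have hgmono : MonotoneOn g (Icc 0 s) := by
      apply monotoneOn_of_deriv_nonneg (convex_Icc 0 s)
        (fun r hr => (hg r hr.1).continuousAt.continuousWithinAt)
      · rw [interior_Icc]
        exact fun r hr => (hg r hr.1.le).differentiableAt.differentiableWithinAt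
      · rw [interior_Icc]
        intro r hr
        rw [(hg r hr.1.le).deriv]
        have hμr : μ r < m := hlt r hr.1.le hr.2
        have hφr : φ (μ r) ≤ m - μ r := hφub m hm (μ r) hμr.le
        have h4 : (0 : ℝ) ≤ (m - μ r) - φ (μ r) := by linarith
        exact mul_nonneg (mul_nonneg hlam.le (Real.exp_pos _).le) h4
    have h0s : g 0 ≤ g s := hgmono ⟨le_refl 0, hs0⟩ ⟨hs0, le_refl s⟩ hs0
    have hg0 : g 0 = m - μ₀ := by simp [hgdef, hinit]
    have hgs : g s ≤ 0 := by
      show (m - μ s) * Real.exp (lam * s) ≤ 0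
      nlinarith [Real.exp_pos (lam * s)]
    rw [hg0] at h0s
    linarith
  have hderivpos : ∀ t : ℝ, 0 ≤ t → 0 < lam * φ (μ t) :=
    fun t ht => mul_pos hlam (hφpos _ (hμM t ht))
  have hmono : StrictMonoOn μ (Ici 0) := by
    apply strictMonoOn_of_deriv_pos (convex_Ici 0) hμcont
    intro t ht
    rw [interior_Ici] at ht
    rw [(hode t (le_of_lt ht)).deriv]
    exact hderivpos t (le_of_lt ht)
  refine ⟨hmono, ?_, ?_, ?_⟩
  · -- strict concavity
    apply StrictAntiOn.strictConcaveOn_of_deriv (convex_Ici 0) hμcont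
    rw [interior_Ici]
    intro s hs t ht hst
    rw [(hode s (le_of_lt hs)).deriv, (hode t (le_of_lt ht)).deriv]
    have hμst : μ s < μ t := hmono (mem_Ici.2 (le_of_lt hs)) (mem_Ici.2 (le_of_lt ht)) hst
    exact mul_lt_mul_of_pos_left (hφstrict (μ s) (μ t) hμst (hμM t (le_of_lt ht))) hlam
  · -- continuity of t ↦ lam * φ (μ t)
    have hlip : LipschitzWith 1 φ := by
      apply LipschitzWith.of_dist_le_mul
      intro a b
      rw [Real.dist_eq, Real.dist_eq, NNReal.coe_one, one_mul]
      rcases le_total a b with hab | hab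
      · have h1 := hsplit a b hab
        have h2 := hIocnn a b
        have h3 := hIocle a b hab
        have h4 : |a - b| = b - a := by rw [abs_sub_comm]; exact abs_of_nonneg (by linarith)
        rw [h4, abs_of_nonneg (by linarith : (0:ℝ) ≤ φ a - φ b)]
        linarith
      · have h1 := hsplit b a hab
        have h2 := hIocnn b a
        have h3 := hIocle b a hab
        have h4 : |a - b| = a - b := abs_of_nonneg (by linarith)
        rw [h4, abs_sub_comm, abs_of_nonneg (by linarith : (0:ℝ) ≤ φ b - φ a)]
        linarith
    exact continuousOn_const.mul ((hlip.continuous.comp_continuousOn hμcont))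
  · -- limit
    set ν : ℝ → ℝ := fun t => μ (max t 0) with hνdef
    have hmonoOn : MonotoneOn μ (Ici 0) := hmono.monotoneOn
    have hνmono : Monotone ν := fun s t hst =>
      hmonoOn (le_max_right s 0) (le_max_right t 0) (max_le_max hst (le_refl 0))
    have heq : ∀ᶠ t in atTop, ν t = μ t := by
      filter_upwards [eventually_ge_atTop (0 : ℝ)] with t ht
      simp [hνdef, max_eq_left ht]
    by_cases hbdd : BddAbove (range ν)
    · set L := ⨆ t, ν t with hLdef
      have hνlim : Tendsto ν atTop (nhds L) := tendsto_atTop_ciSup hνmono hbdd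
      have hμlim : Tendsto μ atTop (nhds L) := hνlim.congr' heq
      have hμleL : ∀ t, 0 ≤ t → μ t ≤ L := by
        intro t ht
        have hvt : ν t = μ t := by simp [hνdef, max_eq_left ht]
        rw [← hvt]
        exact le_ciSup hbdd t
      have hnotlt : ¬ ((L : EReal) < M) := by
        intro hLM
        have hφL : 0 < φ L := hφpos L hLM
        set c := lam * φ L with hcdef
        have hc : 0 < c := mul_pos hlam hφL
        have hgrow : ∀ t, 0 ≤ t → μ₀ + c * t ≤ μ t := by
          intro t ht
          set h : ℝ → ℝ := fun r => μ r - c * r with hhdef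
          have hh : ∀ r, 0 ≤ r → HasDerivAt h (lam * φ (μ r) - c * 1) r := fun r hr =>
            (hode r hr).sub ((hasDerivAt_id r).const_mul c)
          have hhm : MonotoneOn h (Ici 0) := by
            apply monotoneOn_of_deriv_nonneg (convex_Ici 0)
              (fun r hr => (hh r hr).continuousAt.continuousWithinAt)
            · rw [interior_Ici]
              exact fun r hr => (hh r hr.le).differentiableAt.differentiableWithinAt
            · rw [interior_Ici]
              intro r hr
              rw [(hh r hr.le).deriv]
              have hphi : φ L ≤ φ (μ r) := hφanti (hμleL r hr.le)
              have := mul_le_mul_of_nonneg_left hphi hlam.le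
              simp only [hcdef] at *
              linarith
          have hmono0t := hhm self_mem_Ici (mem_Ici.2 ht) ht
          simp only [hhdef, hinit] at hmono0t
          linarith
        set t₀ := max 0 ((L + 1 - μ₀) / c) with ht₀def
        have ht₀ : 0 ≤ t₀ := le_max_left _ _
        have hct : L + 1 - μ₀ ≤ t₀ * c := (div_le_iff₀ hc).1 (le_max_right _ _)
        have hg1 := hgrow t₀ ht₀
        have hg2 := hμleL t₀ ht₀
        have := mul_comm c t₀
        linarith
      have hnotgt : ¬ (M < (L : EReal)) := by
        intro hML
        have hMtop : M ≠ ⊤ := fun h => absurd (h ▸ hML) (not_lt.2 le_top)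
        have hm : M = ((M.toReal : ℝ) : EReal) := (EReal.coe_toReal hMtop (ne_of_gt hMbot)).symm
        have hmL : M.toReal < L := by
          rw [hm] at hML
          exact_mod_cast hML
        obtain ⟨i, hi⟩ := exists_lt_of_lt_ciSup (hLdef ▸ hmL)
        have h5 : (ν i : EReal) < M := hμM (max i 0) (le_max_right i 0)
        rw [hm] at h5
        have h6 : ν i < M.toReal := by exact_mod_cast h5
        linarith
      have hLM : M = (L : EReal) := le_antisymm (not_lt.1 hnotlt) (not_lt.1 hnotgt)
      rw [hLM]
      exact EReal.tendsto_coe.2 hμlim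
    · have hν_top : Tendsto ν atTop atTop := by
        apply tendsto_atTop_atTop_of_monotone hνmono
        intro b
        rcases not_bddAbove_iff.1 hbdd b with ⟨r, ⟨a, rfl⟩, hab⟩
        exact ⟨a, hab.le⟩
      have hμ_top : Tendsto μ atTop atTop := hν_top.congr' heq
      have hMtop : M = ⊤ := by
        by_contra h
        have hm : M = ((M.toReal : ℝ) : EReal) := (EReal.coe_toReal h (ne_of_gt hMbot)).symm
        apply hbdd
        refine ⟨M.toReal, ?_⟩
        rintro r ⟨t, rfl⟩
        have h7 := hμM (max t 0) (le_max_right t 0)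
        rw [hm] at h7
        exact (EReal.coe_lt_coe_iff.1 h7).le
      rw [hMtop, EReal.tendsto_nhds_top_iff_real]
      intro x
      filter_upwards [hμ_top.eventually_gt_atTop x] with t ht
      exact_mod_cast ht
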